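/- Let 𝒜 ∈ ℝ^{d₁×⋯×dₙ} be a tensor with multilinear rank (r₁,…,rₙ). Let I_i ⊆ [d_i] and J_i ⊆ [∏_{j≠i} d_j] be index sets, and set ℛ = 𝒜(I₁,…,Iₙ), C_i = 𝒜_(i)(:,J_i), U_i = C_i(I_i,:). Then the following are equivalent: (i) rank(U_i) = r_i for all i = 1,…,n; (ii) 𝒜 = ℛ ×₁ (C₁U₁†) ×₂ ⋯ ×ₙ (CₙUₙ†); (iii) rank(C_i) = r_i for all i and the multilinear rank of ℛ is (r₁,…,rₙ). -/

import Mathlib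

open scoped BigOperators
open Matrix

noncomputable section

namespace TCUR

/-- Euclidean norm of a finite real vector. -/
def enorm {ι : Type*} [Fintype ι] (x : ι → ℝ) : ℝ :=
  Real.sqrt (∑ i, x i ^ 2)

/-- Frobenius norm of a real matrix. -/
def frob {m n : Type*} [Fintype m] [Fintype n] (A : Matrix m n ℝ) : ℝ :=
  Real.sqrt (∑ i, ∑ j, A i j ^ 2)

/-- Spectral norm of a real matrix. -/
def spec {m n : Type*} [Fintype m] [Fintype n] (A : Matrix m n ℝ) : ℝ :=
  sSup ((fun x => enorm (A.mulVec x)) '' {x : n → ℝ | enorm x ≤ 1})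

/-- The four Penrose conditions: `B` is the Moore–Penrose pseudoinverse of `A`. -/
def IsMP {m n : Type*} [Fintype m] [Fintype n] (A : Matrix m n ℝ) (B : Matrix n m ℝ) : Prop :=
  A * B * A = A ∧ B * A * B = B ∧ (A * B)ᵀ = A * B ∧ (B * A)ᵀ = B * A

open Classical in
/-- Moore–Penrose pseudoinverse of a real matrix (def body). -/
def pinv {m n : Type*} [Fintype m] [Fintype n] (A : Matrix m n ℝ) : Matrix n m ℝ :=
  if h : ∃ B, IsMP A B then h.choose else 0

/-- `sval k A` is the `k`-th largest singular value of `A`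
(via the Eckart–Young characterization). -/
def sval {m n : Type*} [Fintype m] [Fintype n] (k : ℕ) (A : Matrix m n ℝ) : ℝ :=
  sInf ((fun B => spec (A - B)) '' {B : Matrix m n ℝ | B.rank < k})

/-- `IsBestRank r A Ar`: `Ar` is a best rank-`r` (Frobenius) approximation of `A`,
 e.g. a rank-`r` truncated SVD of `A`. -/
def IsBestRank {m n : Type*} [Fintype m] [Fintype n] (r : ℕ) (A Ar : Matrix m n ℝ) : Prop :=
  Ar.rank ≤ r ∧ ∀ B : Matrix m n ℝ, B.rank ≤ r → frob (A - Ar) ≤ frob (A - B)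

/-- Compact SVD data: `A = W * S * Vᵀ` with `W, V` having orthonormal columns and
`S` diagonal with positive diagonal entries. -/
def CompactSVD {m n : Type*} [Fintype m] [Fintype n] {r : ℕ} (A : Matrix m n ℝ)
    (W : Matrix m (Fin r) ℝ) (S : Matrix (Fin r) (Fin r) ℝ) (V : Matrix n (Fin r) ℝ) : Prop :=
  A = W * S * Vᵀ ∧ Wᵀ * W = 1 ∧ Vᵀ * V = 1 ∧ (∀ i j, i ≠ j → S i j = 0) ∧ ∀ i, 0 < S i i

/-- Coherence `μ(W) = (d/r) max_i ‖W(i,:)‖₂²` of a matrix with orthonormal columns. -/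
def coh {m r : Type*} [Fintype m] [Fintype r] (W : Matrix m r ℝ) : ℝ :=
  ((Fintype.card m : ℝ) / (Fintype.card r : ℝ)) * ⨆ i : m, ∑ j, W i j ^ 2

/-- Row submatrix with rows restricted to `I`. -/
def rowsub {m k : Type*} (M : Matrix m k ℝ) (I : Finset m) : Matrix {x // x ∈ I} k ℝ :=
  M.submatrix Subtype.val id

/-- Probability, with respect to the uniform distribution on the finite sample space
`{ω : Ω | cond ω}`, of the event `{ω | event ω}`. -/
def uniformProb {Ω : Type*} [Fintype Ω] (cond event : Ω → Prop) : ℝ :=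
  (Nat.card {ω : Ω // cond ω ∧ event ω} : ℝ) / (Nat.card {ω : Ω // cond ω} : ℝ)

variable {n : ℕ}

/-- Mode-`k` unfolding of an `n`-mode tensor: the matrix whose columns are the
mode-`k` fibers of the tensor. -/
def unfold {ι : Fin n → Type*} (A : ((i : Fin n) → ι i) → ℝ) (k : Fin n) :
    Matrix (ι k) ((j : {j : Fin n // j ≠ k}) → ι j.1) ℝ :=
  fun x y => A fun i => if h : i = k then cast (congrArg ι h.symm) x else y ⟨i, h⟩

/-- Tucker (all-modes) product `T ×₁ M 1 ×₂ ⋯ ×ₙ M n`. -/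
def tucker {ι κ : Fin n → Type*} [∀ i, Fintype (κ i)]
    (T : ((i : Fin n) → κ i) → ℝ) (M : (i : Fin n) → Matrix (ι i) (κ i) ℝ) :
    ((i : Fin n) → ι i) → ℝ :=
  fun x => ∑ y : (i : Fin n) → κ i, (∏ i, M i (x i) (y i)) * T y

/-- The subtensor with mode-`i` indices restricted to `I i`. -/
def subT {ι : Fin n → Type*} (A : ((i : Fin n) → ι i) → ℝ)
    (I : (i : Fin n) → Finset (ι i)) : ((i : Fin n) → {x // x ∈ I i}) → ℝ :=
  fun x => A fun i => (x i).1

/-- Frobenius norm of a tensor. -/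
def tfrob {ι : Fin n → Type*} [∀ i, Fintype (ι i)] (A : ((i : Fin n) → ι i) → ℝ) : ℝ :=
  Real.sqrt (∑ x : (i : Fin n) → ι i, A x ^ 2)

/-- `Cmat A J i = 𝒜_(i)(:,J_i)`: the mode-`i` unfolding restricted to the columns `J i`. -/
def Cmat {ι : Fin n → Type*} (A : ((i : Fin n) → ι i) → ℝ)
    (J : (i : Fin n) → Finset ((j : {j : Fin n // j ≠ i}) → ι j.1)) (i : Fin n) :
    Matrix (ι i) {y // y ∈ J i} ℝ :=
  (unfold A i).submatrix id Subtype.val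

/-- `Umat A I J i = 𝒜_(i)(I_i,J_i)`. -/
def Umat {ι : Fin n → Type*} (A : ((i : Fin n) → ι i) → ℝ)
    (I : (i : Fin n) → Finset (ι i))
    (J : (i : Fin n) → Finset ((j : {j : Fin n // j ≠ i}) → ι j.1)) (i : Fin n) :
    Matrix {x // x ∈ I i} {y // y ∈ J i} ℝ :=
  (unfold A i).submatrix Subtype.val Subtype.val

/-- The Chidori column index set `⊗_{j ≠ i} I j`. -/
def chidoriJ {ι : Fin n → Type*} (I : (i : Fin n) → Finset (ι i)) (i : Fin n) :
    Finset ((j : {j : Fin n // j ≠ i}) → ι j.1) :=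
  Fintype.piFinset fun j => I j.1

/-- `σ_max(𝒜) = max_j σ₁(𝒜_(j))`. -/
def tsmax {ι : Fin n → Type*} [∀ i, Fintype (ι i)] (A : ((i : Fin n) → ι i) → ℝ) : ℝ :=
  ⨆ j, sval 1 (unfold A j)

/-- `σ_min(𝒜) = min_j σ_{r_j}(𝒜_(j))`. -/
def tsmin {ι : Fin n → Type*} [∀ i, Fintype (ι i)] (A : ((i : Fin n) → ι i) → ℝ)
    (r : Fin n → ℕ) : ℝ :=
  ⨅ j, sval (r j) (unfold A j)


lemma vec_eq_zero_of_dot {ι : Type*} [Fintype ι] {v : ι → ℝ}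
    (h : v ⬝ᵥ v = 0) : v = 0 := by
  funext i
  have h' := (Finset.sum_eq_zero_iff_of_nonneg
    (fun i _ => mul_self_nonneg (v i))).1 h i (Finset.mem_univ i)
  exact mul_self_eq_zero.1 h'

lemma isUnit_of_mulVec_inj {p : Type*} [Fintype p] [DecidableEq p] {M : Matrix p p ℝ}
    (h : ∀ x, M *ᵥ x = 0 → x = 0) : IsUnit M.det := by
  rw [isUnit_iff_ne_zero]
  intro hd
  obtain ⟨v, hv, hv0⟩ := (Matrix.exists_mulVec_eq_zero_iff).2 hd
  exact hv (h v hv0)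

theorem exists_isMP {m n : Type*} [Fintype m] [Fintype n] [DecidableEq n]
    (A : Matrix m n ℝ) : ∃ B, IsMP A B := by --
  classical
  obtain ⟨r, hr⟩ : ∃ r, A.rank = r := ⟨A.rank, rfl⟩
  set V := LinearMap.range A.mulVecLin with hV
  have hfr : Module.finrank ℝ V = r := hr
  let b : Module.Basis (Fin r) ℝ V := Module.finBasisOfFinrankEq ℝ V hfr
  let F : Matrix m (Fin r) ℝ := fun i k => (b k : m → ℝ) i
  have colmem : ∀ j : n, A *ᵥ Pi.single j 1 ∈ V := fun j => ⟨Pi.single j 1, rfl⟩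
  let colA : n → V := fun j => ⟨A *ᵥ Pi.single j 1, colmem j⟩
  let G : Matrix (Fin r) n ℝ := fun k j => b.repr (colA j) k
  have hFv : ∀ x : Fin r → ℝ, F *ᵥ x = ((∑ k, x k • b k : V) : m → ℝ) := by
    intro x
    funext i
    rw [Submodule.coe_sum]
    simp [Matrix.mulVec, dotProduct, F, Finset.sum_apply, mul_comm]
  have hFG : F * G = A := by
    ext i j
    have hs := b.sum_repr (colA j)
    have h2 : ((∑ k, b.repr (colA j) k • b k : V) : m → ℝ) i = (A *ᵥ Pi.single j 1) i := by
      rw [hs]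
    rw [Submodule.coe_sum] at h2
    simp only [Matrix.mul_apply]
    simp only [Submodule.coe_smul, Pi.smul_apply, smul_eq_mul, Finset.sum_apply] at h2
    rw [Matrix.mulVec_single] at h2
    simpa [G, F, mul_comm] using h2
  have hFinj : ∀ x, F *ᵥ x = 0 → x = 0 := by
    intro x hx
    rw [hFv] at hx
    have hz : (∑ k, x k • b k : V) = 0 := Subtype.ext hx
    funext k
    exact Fintype.linearIndependent_iff.mp b.linearIndependent x hz k
  have hGv : ∀ y : n → ℝ, G *ᵥ y = b.repr ⟨A *ᵥ y, ⟨y, rfl⟩⟩ := by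
    intro y
    have hy : (⟨A *ᵥ y, ⟨y, rfl⟩⟩ : V) = ∑ j, y j • colA j := by
      apply Subtype.ext
      rw [Submodule.coe_sum]
      funext i
      simp [colA, Matrix.mulVec, dotProduct, Finset.sum_apply, mul_comm]
    rw [hy]
    funext k
    simp [G, Matrix.mulVec, dotProduct, map_sum, mul_comm]
  have hGsurj : ∀ v : Fin r → ℝ, ∃ y, G *ᵥ y = v := by
    intro v
    obtain ⟨y, hy⟩ := (b.equivFun.symm v).2
    refine ⟨y, ?_⟩
    rw [hGv]
    have h3 : (⟨A *ᵥ y, ⟨y, rfl⟩⟩ : V) = b.equivFun.symm v := Subtype.ext hy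
    rw [h3]
    funext k
    rw [← Module.Basis.equivFun_apply]
    rw [b.equivFun.apply_symm_apply]
  have hGtinj : ∀ x, Gᵀ *ᵥ x = 0 → x = 0 := by
    intro x hx
    obtain ⟨y, hy⟩ := hGsurj x
    have h1 : x ⬝ᵥ x = (Gᵀ *ᵥ x) ⬝ᵥ y := by
      rw [← hy, Matrix.dotProduct_mulVec, Matrix.mulVec_transpose]
    apply vec_eq_zero_of_dot
    rw [h1, hx, zero_dotProduct]
  -- invertibility of Fᵀ*F and G*Gᵀ
  have hFtF : IsUnit (Fᵀ * F).det := by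
    apply isUnit_of_mulVec_inj
    intro x hx
    apply hFinj
    apply vec_eq_zero_of_dot
    have h1 : (F *ᵥ x) ⬝ᵥ (F *ᵥ x) = x ⬝ᵥ ((Fᵀ * F) *ᵥ x) := by
      rw [← Matrix.mulVec_mulVec, Matrix.dotProduct_mulVec, Matrix.mulVec_transpose,
        dotProduct_comm]
    rw [h1, hx, dotProduct_zero]
  have hGGt : IsUnit (G * Gᵀ).det := by
    apply isUnit_of_mulVec_inj
    intro x hx
    apply hGtinj
    apply vec_eq_zero_of_dot
    have h1 : (Gᵀ *ᵥ x) ⬝ᵥ (Gᵀ *ᵥ x) = x ⬝ᵥ ((G * Gᵀ) *ᵥ x) := by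
      rw [← Matrix.mulVec_mulVec, Matrix.dotProduct_mulVec, Matrix.mulVec_transpose,
        Matrix.vecMul_transpose, dotProduct_comm]
    rw [h1, hx, dotProduct_zero]
  set P := (Fᵀ * F)⁻¹ with hPdef
  set Q := (G * Gᵀ)⁻¹ with hQdef
  have hP1 : (Fᵀ * F) * P = 1 := Matrix.mul_nonsing_inv _ hFtF
  have hP2 : P * (Fᵀ * F) = 1 := Matrix.nonsing_inv_mul _ hFtF
  have hQ1 : (G * Gᵀ) * Q = 1 := Matrix.mul_nonsing_inv _ hGGt
  have hQ2 : Q * (G * Gᵀ) = 1 := Matrix.nonsing_inv_mul _ hGGt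
  have hPt : Pᵀ = P := by
    rw [hPdef, Matrix.transpose_nonsing_inv, Matrix.transpose_mul, Matrix.transpose_transpose]
  have hQt : Qᵀ = Q := by
    rw [hQdef, Matrix.transpose_nonsing_inv, Matrix.transpose_mul, Matrix.transpose_transpose]
  refine ⟨Gᵀ * (Q * (P * Fᵀ)), ?_, ?_, ?_, ?_⟩
  · -- A * B * A = A
    rw [← hFG]
    simp only [← Matrix.mul_assoc]
    rw [Matrix.mul_assoc F G Gᵀ, Matrix.mul_assoc F (G*Gᵀ) Q, hQ1, Matrix.mul_one,
      Matrix.mul_assoc (F*P) Fᵀ F, Matrix.mul_assoc F P (Fᵀ*F), hP2, Matrix.mul_one]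
  · -- B * A * B = B
    rw [← hFG]
    simp only [← Matrix.mul_assoc]
    rw [Matrix.mul_assoc (Gᵀ*Q*P) Fᵀ F, Matrix.mul_assoc (Gᵀ*Q) P (Fᵀ*F), hP2,
      Matrix.mul_one, Matrix.mul_assoc (Gᵀ*Q) G Gᵀ, Matrix.mul_assoc Gᵀ Q (G*Gᵀ), hQ2,
      Matrix.mul_one]
  · -- (A*B)ᵀ = A*B
    have hAB : A * (Gᵀ * (Q * (P * Fᵀ))) = F * P * Fᵀ := by
      rw [← hFG]
      simp only [← Matrix.mul_assoc]
      rw [Matrix.mul_assoc F G Gᵀ, Matrix.mul_assoc F (G*Gᵀ) Q, hQ1, Matrix.mul_one]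
    rw [hAB]
    simp only [Matrix.transpose_mul, Matrix.transpose_transpose, hPt, Matrix.mul_assoc]
  · -- (B*A)ᵀ = B*A
    have hBA : (Gᵀ * (Q * (P * Fᵀ))) * A = Gᵀ * Q * G := by
      rw [← hFG]
      simp only [← Matrix.mul_assoc]
      rw [Matrix.mul_assoc (Gᵀ*Q*P) Fᵀ F, Matrix.mul_assoc (Gᵀ*Q) P (Fᵀ*F), hP2,
        Matrix.mul_one]
    rw [hBA]
    simp only [Matrix.transpose_mul, Matrix.transpose_transpose, hQt, Matrix.mul_assoc]


section RankLemmas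
variable {m' n' J' I₂ : Type*} [Fintype m'] [Fintype n'] [Fintype J'] [Fintype I₂]

lemma range_submatrix_col_le [DecidableEq n'] (A : Matrix m' n' ℝ) (g : J' → n') :
    LinearMap.range (A.submatrix id g).mulVecLin ≤ LinearMap.range A.mulVecLin := by
  rintro _ ⟨x, rfl⟩
  refine ⟨fun j => ∑ k, if g k = j then x k else 0, ?_⟩
  show A *ᵥ _ = (A.submatrix id g) *ᵥ x
  funext i
  simp only [Matrix.mulVec, dotProduct, Matrix.submatrix_apply, id_eq,
    Finset.mul_sum, mul_ite, mul_zero]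
  rw [Finset.sum_comm]
  congr 1
  funext k
  rw [Finset.sum_ite_eq Finset.univ (g k) (fun j => A i j * x k)]
  simp

lemma rank_submatrix_col_le [DecidableEq n'] (A : Matrix m' n' ℝ) (g : J' → n') :
    (A.submatrix id g).rank ≤ A.rank :=
  Submodule.finrank_mono (range_submatrix_col_le A g)

lemma rank_submatrix_le' [DecidableEq n'] [DecidableEq m'] (A : Matrix m' n' ℝ)
    (f : I₂ → m') (g : J' → n') : (A.submatrix f g).rank ≤ A.rank := by
  have h1 : (A.submatrix f g) = ((A.submatrix f id).submatrix id g) := rfl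
  have h2 : (A.submatrix f id).rank ≤ A.rank := by
    have : (A.submatrix f id) = (Aᵀ.submatrix id f)ᵀ := rfl
    rw [this, Matrix.rank_transpose]
    calc (Aᵀ.submatrix id f).rank ≤ Aᵀ.rank := rank_submatrix_col_le Aᵀ f
      _ = A.rank := Matrix.rank_transpose A
  calc (A.submatrix f g).rank ≤ (A.submatrix f id).rank := by
        rw [h1]; exact rank_submatrix_col_le _ g
    _ ≤ A.rank := h2

/-- If the columns `g` have full rank, then `A = A(:,g) * X` for some `X`. -/
lemma exists_eq_mul_of_rank_col [DecidableEq n'] (A : Matrix m' n' ℝ) (g : J' → n')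
    (h : (A.submatrix id g).rank = A.rank) :
    ∃ X : Matrix J' n' ℝ, A = A.submatrix id g * X := by
  have hle := range_submatrix_col_le A g
  have heq : LinearMap.range (A.submatrix id g).mulVecLin = LinearMap.range A.mulVecLin :=
    Submodule.eq_of_le_of_finrank_eq hle h
  have hcol : ∀ j : n', ∃ x : J' → ℝ, (A.submatrix id g) *ᵥ x = A *ᵥ Pi.single j 1 := by
    intro j
    have : A *ᵥ Pi.single j 1 ∈ LinearMap.range (A.submatrix id g).mulVecLin := by
      rw [heq]; exact ⟨Pi.single j 1, rfl⟩
    exact this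
  choose X hX using hcol
  refine ⟨fun k j => X j k, ?_⟩
  ext i j
  have := congrFun (hX j) i
  simp only [Matrix.mulVec_single_one, Matrix.col_apply] at this
  show A i j = ∑ k, A.submatrix id g i k * X j k
  simp only [Matrix.mulVec, dotProduct] at this
  exact this.symm

lemma exists_eq_mul_of_rank_row [DecidableEq n'] [DecidableEq m'] (A : Matrix m' n' ℝ) (f : I₂ → m')
    (h : (A.submatrix f id).rank = A.rank) :
    ∃ Y : Matrix m' I₂ ℝ, A = Y * A.submatrix f id := by
  have ht : (Aᵀ.submatrix id f).rank = Aᵀ.rank := by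
    have e1 : (Aᵀ.submatrix id f) = (A.submatrix f id)ᵀ := rfl
    rw [e1, Matrix.rank_transpose, Matrix.rank_transpose, h]
  obtain ⟨X, hX⟩ := exists_eq_mul_of_rank_col Aᵀ f ht
  refine ⟨Xᵀ, ?_⟩
  have := congrArg Matrix.transpose hX
  rw [Matrix.transpose_transpose, Matrix.transpose_mul] at this
  exact this


end RankLemmas

def merge {κ : Fin n → Type*} (i : Fin n) (c : κ i)
    (y : (j : {j : Fin n // j ≠ i}) → κ j.1) : (j : Fin n) → κ j :=
  fun j => if h : j = i then cast (congrArg κ h.symm) c else y ⟨j, h⟩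

lemma unfold_apply {ι : Fin n → Type*} (A : ((i : Fin n) → ι i) → ℝ) (i : Fin n)
    (c : ι i) (z : (j : {j : Fin n // j ≠ i}) → ι j.1) :
    unfold A i c z = A (merge i c z) := rfl

@[simp] lemma merge_apply_self {κ : Fin n → Type*} (i : Fin n) (c : κ i)
    (y : (j : {j : Fin n // j ≠ i}) → κ j.1) : merge i c y i = c := by
  have h : merge i c y i = cast (congrArg κ (rfl : i = i).symm) c := dif_pos rfl
  rw [h]
  exact eq_of_heq (cast_heq _ _)

lemma merge_apply_ne {κ : Fin n → Type*} {i : Fin n} (c : κ i)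
    (y : (j : {j : Fin n // j ≠ i}) → κ j.1) {j : Fin n} (h : j ≠ i) :
    merge i c y j = y ⟨j, h⟩ := dif_neg h

lemma merge_self {κ : Fin n → Type*} (i : Fin n) (x : (j : Fin n) → κ j) :
    merge i (x i) (fun j => x j.1) = x := by
  funext j
  by_cases h : j = i
  · subst h; exact merge_apply_self _ _ _
  · exact merge_apply_ne _ _ h

lemma merge_update {κ : Fin n → Type*} [DecidableEq (Fin n)] (i : Fin n)
    (x : (j : Fin n) → κ j) (c : κ i) :
    merge i c (fun j => x j.1) = Function.update x i c := by
  funext j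
  by_cases h : j = i
  · subst h
    rw [merge_apply_self, Function.update_self]
  · rw [merge_apply_ne _ _ h, Function.update_of_ne h]

def splitEquiv (κ : Fin n → Type*) (i : Fin n) :
    ((j : Fin n) → κ j) ≃ (κ i × ((j : {j : Fin n // j ≠ i}) → κ j.1)) where
  toFun y := (y i, fun j => y j.1)
  invFun p := merge i p.1 p.2
  left_inv y := merge_self i y
  right_inv p := by
    obtain ⟨c, z⟩ := p
    refine Prod.ext (merge_apply_self _ _ _) ?_
    funext j
    exact merge_apply_ne _ _ j.2

lemma sum_split {κ : Fin n → Type*} [∀ j, Fintype (κ j)] (i : Fin n)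
    (f : ((j : Fin n) → κ j) → ℝ) :
    ∑ y, f y = ∑ c : κ i, ∑ z : (j : {j : Fin n // j ≠ i}) → κ j.1, f (merge i c z) := by
  rw [← (splitEquiv κ i).symm.sum_comp f, Fintype.sum_prod_type]
  rfl

lemma prod_split (i : Fin n) (f : Fin n → ℝ) :
    ∏ j, f j = f i * ∏ j : {j : Fin n // j ≠ i}, f j.1 := by
  rw [← Finset.mul_prod_erase Finset.univ f (Finset.mem_univ i)]
  congr 1
  exact Finset.prod_subtype (Finset.univ.erase i)
    (fun x => by simp [Finset.mem_erase]) (fun j => f j)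



lemma pinv_isMP {m n : Type*} [Fintype m] [Fintype n] [DecidableEq n]
    (A : Matrix m n ℝ) : IsMP A (pinv A) := by
  have h := exists_isMP A
  rw [pinv, dif_pos h]
  exact h.choose_spec

section TensorLemmas

variable {n : ℕ} {ι : Fin n → Type*} [∀ i, Fintype (ι i)] [∀ i, DecidableEq (ι i)]

/-- Convert the product over all modes into a dite-matrix sum over the full index set. -/
lemma tucker_sub_eq_full (A : ((i : Fin n) → ι i) → ℝ) (I : (i : Fin n) → Finset (ι i))
    (B : (i : Fin n) → Matrix (ι i) {x // x ∈ I i} ℝ) (x : (i : Fin n) → ι i) :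
    tucker (subT A I) B x =
      ∑ y : (i : Fin n) → ι i,
        (∏ i, (if h : y i ∈ I i then B i (x i) ⟨y i, h⟩ else 0)) * A y := by
  show (∑ z : (i : Fin n) → {v // v ∈ I i}, (∏ i, B i (x i) (z i)) * A (fun i => (z i).1)) = _
  have hvan : ∀ y ∈ Finset.univ, y ∉ Fintype.piFinset I →
      (∏ i, (if h : y i ∈ I i then B i (x i) ⟨y i, h⟩ else 0)) * A y = 0 := by
    intro y _ hy
    obtain ⟨i, hi⟩ : ∃ i, y i ∉ I i := by
      by_contra hc
      push_neg at hc
      exact hy (Fintype.mem_piFinset.2 hc)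
    rw [Finset.prod_eq_zero (Finset.mem_univ i) (dif_neg hi), zero_mul]
  rw [← Finset.sum_subset (Finset.subset_univ (Fintype.piFinset I)) hvan]
  refine Finset.sum_bij (fun z _ => fun k => (z k).1) ?_ ?_ ?_ ?_
  · intro z _
    exact Fintype.mem_piFinset.2 fun k => (z k).2
  · intro z1 _ z2 _ h
    funext k
    exact Subtype.ext (congrFun h k)
  · intro y hy
    exact ⟨fun k => ⟨y k, (Fintype.mem_piFinset.1 hy) k⟩, Finset.mem_univ _, rfl⟩
  · intro z _
    congr 1
    refine Finset.prod_congr rfl fun k _ => ?_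
    rw [dif_pos (z k).2]

lemma tuckerM_aux (A : ((i : Fin n) → ι i) → ℝ)
    (M : (i : Fin n) → Matrix (ι i) (ι i) ℝ)
    (hM : ∀ i, M i * unfold A i = unfold A i) (s : Finset (Fin n)) :
    ∀ x : (i : Fin n) → ι i,
      ∑ y : (i : Fin n) → ι i, (∏ i ∈ s, M i (x i) (y i)) *
        ((∏ i ∈ sᶜ, if y i = x i then (1:ℝ) else 0) * A y) = A x := by
  induction s using Finset.induction_on with
  | empty =>
    intro x
    rw [Finset.sum_eq_single x]
    · simp
    · intro y _ hy
      obtain ⟨i, hi⟩ := Function.ne_iff.1 hy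
      have hz : (∏ i ∈ (∅ : Finset (Fin n))ᶜ, if y i = x i then (1:ℝ) else 0) = 0 :=
        Finset.prod_eq_zero (Finset.mem_compl.2 (Finset.notMem_empty i)) (if_neg hi)
      rw [hz]
      ring
    · intro h
      exact absurd (Finset.mem_univ x) h
  | @insert a s ha ih =>
    intro x
    have key : ∀ x' : (i : Fin n) → ι i,
        ∑ c : ι a, M a (x' a) c * A (Function.update x' a c) = A x' := by
      intro x'
      have h2 := congrFun (congrFun (hM a) (x' a)) (fun j => x' j.1)
      rw [Matrix.mul_apply] at h2
      calc ∑ c : ι a, M a (x' a) c * A (Function.update x' a c)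
          = ∑ c : ι a, M a (x' a) c * unfold A a c (fun j => x' j.1) := by
            refine Finset.sum_congr rfl fun c _ => ?_
            rw [unfold_apply, merge_update]
        _ = unfold A a (x' a) (fun j => x' j.1) := h2
        _ = A x' := by rw [unfold_apply, merge_self]
    have hacompl : a ∈ sᶜ := Finset.mem_compl.2 ha
    calc ∑ y : (i : Fin n) → ι i, (∏ i ∈ insert a s, M i (x i) (y i)) *
          ((∏ i ∈ (insert a s)ᶜ, if y i = x i then (1:ℝ) else 0) * A y)
        = ∑ y : (i : Fin n) → ι i, ∑ c : ι a, M a (x a) c *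
            ((∏ i ∈ s, M i (x i) (y i)) *
              ((if y a = c then (1:ℝ) else 0) *
                ((∏ i ∈ sᶜ.erase a, if y i = x i then (1:ℝ) else 0) * A y))) := by
          refine Finset.sum_congr rfl fun y _ => ?_
          rw [Finset.sum_eq_single (y a)]
          · rw [Finset.prod_insert ha, Finset.compl_insert, if_pos rfl]
            ring
          · intro c _ hc
            rw [if_neg fun h => hc h.symm]
            ring
          · intro h
            exact absurd (Finset.mem_univ _) h
      _ = ∑ c : ι a, ∑ y : (i : Fin n) → ι i, M a (x a) c *
            ((∏ i ∈ s, M i (x i) (y i)) *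
              ((if y a = c then (1:ℝ) else 0) *
                ((∏ i ∈ sᶜ.erase a, if y i = x i then (1:ℝ) else 0) * A y))) :=
          Finset.sum_comm
      _ = ∑ c : ι a, M a (x a) c * A (Function.update x a c) := by
          refine Finset.sum_congr rfl fun c _ => ?_
          rw [← Finset.mul_sum]
          congr 1
          rw [← ih (Function.update x a c)]
          refine Finset.sum_congr rfl fun y _ => ?_
          have hP : (∏ i ∈ s, M i ((Function.update x a c) i) (y i))
              = ∏ i ∈ s, M i (x i) (y i) := by
            refine Finset.prod_congr rfl fun i hi => ?_
            rw [Function.update_of_ne (ne_of_mem_of_not_mem hi ha)]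
          have hD : (∏ i ∈ sᶜ, if y i = (Function.update x a c) i then (1:ℝ) else 0)
              = (if y a = c then (1:ℝ) else 0) *
                  ∏ i ∈ sᶜ.erase a, if y i = x i then (1:ℝ) else 0 := by
            rw [← Finset.mul_prod_erase sᶜ _ hacompl, Function.update_self]
            congr 1
            refine Finset.prod_congr rfl fun i hi => ?_
            rw [Function.update_of_ne (Finset.ne_of_mem_erase hi)]
          rw [hP, hD]
          ring
      _ = A x := key x

/-- If every mode satisfies `M i * A_(i) = A_(i)` then the all-modes product is `A`. -/
lemma tuckerM_eq_self (A : ((i : Fin n) → ι i) → ℝ)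
    (M : (i : Fin n) → Matrix (ι i) (ι i) ℝ)
    (hM : ∀ i, M i * unfold A i = unfold A i) (x : (i : Fin n) → ι i) :
    ∑ y : (i : Fin n) → ι i, (∏ i, M i (x i) (y i)) * A y = A x := by
  have h := tuckerM_aux A M hM Finset.univ x
  simpa using h

/-- Main reconstruction lemma. -/
lemma tucker_eq_of (A : ((i : Fin n) → ι i) → ℝ) (I : (i : Fin n) → Finset (ι i))
    (B : (i : Fin n) → Matrix (ι i) {x // x ∈ I i} ℝ)
    (hB : ∀ i, B i * (unfold A i).submatrix Subtype.val id = unfold A i) :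
    A = tucker (subT A I) B := by
  funext x
  rw [tucker_sub_eq_full]
  have hM : ∀ i, (Matrix.of fun a b => if h : b ∈ I i then B i a ⟨b, h⟩ else (0:ℝ))
      * unfold A i = unfold A i := by
    intro i
    ext a z
    rw [Matrix.mul_apply]
    have h0 : ∀ b ∈ Finset.univ, b ∉ I i →
        (Matrix.of fun a b => if h : b ∈ I i then B i a ⟨b, h⟩ else (0:ℝ)) a b
          * unfold A i b z = 0 := by
      intro b _ hb
      rw [Matrix.of_apply, dif_neg hb, zero_mul]
    rw [← Finset.sum_subset (Finset.subset_univ (I i)) h0]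
    rw [Finset.sum_subtype (I i) (fun b => Iff.rfl)
      (fun b => (Matrix.of fun a b => if h : b ∈ I i then B i a ⟨b, h⟩ else (0:ℝ)) a b
        * unfold A i b z)]
    have hb : ∑ c : {x // x ∈ I i}, B i a c * (unfold A i).submatrix Subtype.val id c z
        = unfold A i a z :=
      congrFun (congrFun (hB i) a) z
    rw [← hb]
    refine Finset.sum_congr rfl fun c _ => ?_
    rw [Matrix.of_apply, dif_pos c.2]
    rfl
  exact (tuckerM_eq_self A
    (fun i => Matrix.of fun a b => if h : b ∈ I i then B i a ⟨b, h⟩ else (0:ℝ)) hM x).symm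

/-- Mode-`i` unfolding of a Tucker product factors through `B i` and `unfold T i`. -/
lemma unfold_tucker {κ : Fin n → Type*} [∀ i, Fintype (κ i)] [∀ i, DecidableEq (κ i)]
    (T : ((i : Fin n) → κ i) → ℝ) (B : (i : Fin n) → Matrix (ι i) (κ i) ℝ) (i : Fin n) :
    unfold (tucker T B) i =
      B i * (unfold T i *
        Matrix.of (fun (y' : (j : {j : Fin n // j ≠ i}) → κ j.1)
             (z : (j : {j : Fin n // j ≠ i}) → ι j.1) =>
          ∏ j : {j : Fin n // j ≠ i}, B j.1 (z j) (y' j))) := by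
  ext a z
  rw [Matrix.mul_apply]
  show tucker T B (merge i a z) = _
  show (∑ y : (j : Fin n) → κ j, (∏ j, B j (merge i a z j) (y j)) * T y) = _
  rw [sum_split i (fun y => (∏ j, B j (merge i a z j) (y j)) * T y)]
  refine Finset.sum_congr rfl fun c _ => ?_
  rw [Matrix.mul_apply, Finset.mul_sum]
  refine Finset.sum_congr rfl fun y' _ => ?_
  have hp : (∏ j, B j (merge i a z j) (merge i c y' j))
      = B i a c * ∏ j : {j : Fin n // j ≠ i}, B j.1 (z j) (y' j) := by
    rw [prod_split i (fun j => B j (merge i a z j) (merge i c y' j))]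
    congr 1
    · rw [merge_apply_self, merge_apply_self]
    · refine Finset.prod_congr rfl fun j _ => ?_
      rw [merge_apply_ne _ _ j.2, merge_apply_ne _ _ j.2]
  rw [hp]
  have ht : T (merge i c y') = unfold T i c y' := rfl
  rw [ht, Matrix.of_apply]
  ring

lemma unfold_subT (A : ((i : Fin n) → ι i) → ℝ) (I : (i : Fin n) → Finset (ι i)) (i : Fin n) :
    unfold (subT A I) i =
      (unfold A i).submatrix Subtype.val
        (fun (z : (j : {j : Fin n // j ≠ i}) → {x // x ∈ I j.1}) (j : {j : Fin n // j ≠ i}) =>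
          (z j).1) := by
  ext a z
  show subT A I (merge i a z) = A (merge i a.1 (fun j => (z j).1))
  have he : (fun (j : Fin n) => ((merge (κ := fun j => {x // x ∈ I j}) i a z j)).1)
      = merge i a.1 (fun j => (z j).1) := by
    funext j
    by_cases h : j = i
    · subst h
      rw [merge_apply_self, merge_apply_self]
    · rw [merge_apply_ne _ _ h, merge_apply_ne _ _ h]
  exact congrArg A he

lemma submatrix_mul_col {m k p J' : Type*} [Fintype k] (Y : Matrix m k ℝ) (W : Matrix k p ℝ)
    (g : J' → p) : (Y * W).submatrix id g = Y * W.submatrix id g := rfl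

lemma submatrix_mul_row {m k p I'' : Type*} [Fintype k] (M : Matrix m k ℝ) (X : Matrix k p ℝ)
    (f : I'' → m) : (M * X).submatrix f id = M.submatrix f id * X := rfl

end TensorLemmas

/-- **Fiber CUR characterization** (Theorem `thm: CUR Char`).
For a tensor `A` of multilinear rank `(r 1, …, r n)` with `ℛ = A(I₁,…,Iₙ)`,
`Cᵢ = A_(i)(:,Jᵢ)`, `Uᵢ = Cᵢ(Iᵢ,:)`, the following are equivalent:
(i) `rank Uᵢ = rᵢ` for all `i`;
(ii) `A = ℛ ×₁ (C₁U₁†) ×₂ ⋯ ×ₙ (CₙUₙ†)`;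
(iii) `rank Cᵢ = rᵢ` for all `i` and the multilinear rank of `ℛ` is `(r₁,…,rₙ)`. -/
theorem fiber_cur_characterization {n : ℕ} {d : Fin n → ℕ}
    (A : ((i : Fin n) → Fin (d i)) → ℝ) (r : Fin n → ℕ)
    (hrank : ∀ i, (unfold A i).rank = r i)
    (I : (i : Fin n) → Finset (Fin (d i)))
    (J : (i : Fin n) → Finset ((j : {j : Fin n // j ≠ i}) → Fin (d j.1))) :
    ((∀ i, (Umat A I J i).rank = r i) ↔
        A = tucker (subT A I) fun i => Cmat A J i * pinv (Umat A I J i)) ∧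
    ((A = tucker (subT A I) fun i => Cmat A J i * pinv (Umat A I J i)) ↔
        ((∀ i, (Cmat A J i).rank = r i) ∧ ∀ i, (unfold (subT A I) i).rank = r i)) := by
  classical
  -- abbreviations
  have hUW : ∀ i, Umat A I J i = (unfold A i).submatrix Subtype.val Subtype.val := fun _ => rfl
  have hCW : ∀ i, Cmat A J i = (unfold A i).submatrix id Subtype.val := fun _ => rfl
  -- upper bounds from submatrix ranks
  have hUle : ∀ i, (Umat A I J i).rank ≤ r i := by
    intro i
    rw [← hrank i, hUW i]
    exact rank_submatrix_le' (unfold A i) Subtype.val Subtype.val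
  have hCle : ∀ i, (Cmat A J i).rank ≤ r i := by
    intro i
    rw [← hrank i, hCW i]
    exact rank_submatrix_col_le (unfold A i) Subtype.val
  have hRle : ∀ i, (unfold (subT A I) i).rank ≤ r i := by
    intro i
    rw [← hrank i, unfold_subT A I i]
    exact rank_submatrix_le' (unfold A i) Subtype.val _
  -- (i) → (ii)
  have P1 : (∀ i, (Umat A I J i).rank = r i) →
      A = tucker (subT A I) fun i => Cmat A J i * pinv (Umat A I J i) := by
    intro hU
    apply tucker_eq_of
    intro i
    set W := unfold A i with hWdef
    set Rw := W.submatrix Subtype.val id with hRwdef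
    have hURw : Umat A I J i = Rw.submatrix id Subtype.val := rfl
    have hRwle : Rw.rank ≤ r i := by
      rw [← hrank i]
      exact rank_submatrix_le' W Subtype.val id
    have hRwge : r i ≤ Rw.rank := by
      rw [← hU i, hURw]
      exact rank_submatrix_col_le Rw Subtype.val
    have hRwr : Rw.rank = r i := le_antisymm hRwle hRwge
    have hWRrank : Rw.rank = W.rank := by rw [hRwr, hrank i]
    obtain ⟨Y, hY⟩ := exists_eq_mul_of_rank_row W Subtype.val hWRrank
    have hUrankR : (Rw.submatrix id (fun (y : {y // y ∈ J i}) => y.1)).rank = Rw.rank := by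
      rw [show Rw.submatrix id (fun (y : {y // y ∈ J i}) => y.1) = Umat A I J i from rfl,
        hU i, hRwr]
    obtain ⟨Z, hZ⟩ := exists_eq_mul_of_rank_col Rw (fun (y : {y // y ∈ J i}) => y.1) hUrankR
    have hZ' : Rw = Umat A I J i * Z := hZ
    have hCY : Cmat A J i = Y * Umat A I J i := by
      rw [hCW i]
      show W.submatrix id Subtype.val = _
      rw [hY, submatrix_mul_col Y Rw Subtype.val, ← hURw]
    have hU1 : Umat A I J i * pinv (Umat A I J i) * Umat A I J i = Umat A I J i :=
      (pinv_isMP (Umat A I J i)).1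
    show Cmat A J i * pinv (Umat A I J i) * Rw = W
    rw [hCY]
    calc Y * Umat A I J i * pinv (Umat A I J i) * Rw
        = Y * (Umat A I J i * pinv (Umat A I J i) * Umat A I J i * Z) := by
          rw [hZ']
          simp only [Matrix.mul_assoc]
      _ = Y * (Umat A I J i * Z) := by rw [hU1]
      _ = Y * Rw := by rw [← hZ']
      _ = W := hY.symm
  -- (ii) → (iii)
  have P2 : (A = tucker (subT A I) fun i => Cmat A J i * pinv (Umat A I J i)) →
      ((∀ i, (Cmat A J i).rank = r i) ∧ ∀ i, (unfold (subT A I) i).rank = r i) := by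
    intro hA
    have hfact : ∀ i, unfold A i =
        (Cmat A J i * pinv (Umat A I J i)) *
          (unfold (subT A I) i *
            Matrix.of (fun (y' : (j : {j : Fin n // j ≠ i}) → {x // x ∈ I j.1})
                (z : (j : {j : Fin n // j ≠ i}) → Fin (d j.1)) =>
              ∏ j : {j : Fin n // j ≠ i},
                (Cmat A J j.1 * pinv (Umat A I J j.1)) (z j) (y' j))) := by
      intro i
      have h := unfold_tucker (subT A I)
        (fun i => Cmat A J i * pinv (Umat A I J i)) i
      rw [← hA] at h
      exact h
    constructor
    · intro i
      refine le_antisymm (hCle i) ?_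
      rw [← hrank i]
      calc (unfold A i).rank ≤ (Cmat A J i * pinv (Umat A I J i)).rank := by
            rw [hfact i]
            exact Matrix.rank_mul_le_left _ _
        _ ≤ (Cmat A J i).rank := Matrix.rank_mul_le_left _ _
    · intro i
      refine le_antisymm (hRle i) ?_
      rw [← hrank i]
      calc (unfold A i).rank ≤ (unfold (subT A I) i *
            Matrix.of (fun (y' : (j : {j : Fin n // j ≠ i}) → {x // x ∈ I j.1})
                (z : (j : {j : Fin n // j ≠ i}) → Fin (d j.1)) =>
              ∏ j : {j : Fin n // j ≠ i},
                (Cmat A J j.1 * pinv (Umat A I J j.1)) (z j) (y' j))).rank := by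
            rw [hfact i]
            exact Matrix.rank_mul_le_right _ _
        _ ≤ (unfold (subT A I) i).rank := Matrix.rank_mul_le_left _ _
  -- (iii) → (i)
  have P3 : ((∀ i, (Cmat A J i).rank = r i) ∧ ∀ i, (unfold (subT A I) i).rank = r i) →
      ∀ i, (Umat A I J i).rank = r i := by
    rintro ⟨hC, hR⟩ i
    set W := unfold A i with hWdef
    set Rw := W.submatrix Subtype.val id with hRwdef
    have hsub : unfold (subT A I) i = Rw.submatrix id
        (fun (z : (j : {j : Fin n // j ≠ i}) → {x // x ∈ I j.1})
          (j : {j : Fin n // j ≠ i}) => (z j).1) := unfold_subT A I i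
    have hRwge : r i ≤ Rw.rank := by
      rw [← hR i, hsub]
      exact rank_submatrix_col_le Rw _
    have hCrank : (W.submatrix id (fun (y : {y // y ∈ J i}) => y.1)).rank = W.rank := by
      rw [hrank i]
      exact hC i
    obtain ⟨X, hX⟩ := exists_eq_mul_of_rank_col W (fun (y : {y // y ∈ J i}) => y.1) hCrank
    have hRwU : Rw = Umat A I J i * X := by
      rw [hRwdef]
      conv_lhs => rw [hX]
      exact submatrix_mul_row (W.submatrix id (fun (y : {y // y ∈ J i}) => y.1)) X Subtype.val
    refine le_antisymm (hUle i) ?_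
    calc r i ≤ Rw.rank := hRwge
      _ = (Umat A I J i * X).rank := by rw [hRwU]
      _ ≤ (Umat A I J i).rank := Matrix.rank_mul_le_left _ _
  exact ⟨⟨P1, fun h => P3 (P2 h)⟩, ⟨P2, fun h => P1 (P3 h)⟩⟩

end TCUR
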